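/- Let k be a commutative ring and (L,∘) a pre-Lie algebra over k. Let c : L → List L → L be the inductively defined extension of ∘, and define X⟨Y_1,…,Y_n⟩ := c X [Y_1,…,Y_n]. Then these operations form a symmetric brace algebra structure on L: they are k-linear in each argument, invariant under all permutations of Y_1,…,Y_n, satisfy X⟨⟩ = X, and satisfy the symmetric brace identity X⟨Y_1,…,Y_n⟩⟨A_1,…,A_m⟩ = Σ_f X⟨Y_1⟨A_{f⁻¹(1)}⟩, …, Y_n⟨A_{f⁻¹(n)}⟩, A_{f⁻¹(n+1)}⟩, the sum ranging over all maps f : {1,…,m} → {1,…,n+1}. -/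

import Mathlib

/-- The list of arguments `A_j` for `j ∈ f⁻¹(i)`, in increasing order of `j`. -/
def fiberList {V : Type*} {m n : ℕ} (Aa : Fin m → V) (f : Fin m → Fin n) (i : Fin n) :
    List V :=
  ((List.finRange m).filter fun j => f j = i).map Aa

/-- A symmetric brace algebra over `k`: a `k`-module `V` with operations
`(X, Y_1, …, Y_n) ↦ X⟨Y_1, …, Y_n⟩` (encoded as `br : V → List V → V`), `k`-linear in each
argument, invariant under permutations of the `Y`'s, with `X⟨⟩ = X`, satisfying the symmetric
brace identity
`X⟨Y_1,…,Y_n⟩⟨A_1,…,A_m⟩ = Σ_f X⟨Y_1⟨A_{f⁻¹(1)}⟩, …, Y_n⟨A_{f⁻¹(n)}⟩, A_{f⁻¹(n+1)}⟩`,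
the sum ranging over all maps `f : {1,…,m} → {1,…,n+1}`, where the entries of `A_{f⁻¹(n+1)}`
are appended as additional separate arguments of the outer brace. -/
structure SymBrace (k V : Type*) [CommRing k] [AddCommGroup V] [Module k V] where
  br : V → List V → V
  br_nil : ∀ X : V, br X [] = X
  br_perm : ∀ (X : V) (A A' : List V), A.Perm A' → br X A = br X A'
  br_linear_left : ∀ A : List V, IsLinearMap k fun X : V => br X A
  br_linear_arg : ∀ (X : V) (A B : List V) (a b : k) (Y Z : V),
    br X (A ++ (a • Y + b • Z) :: B) = a • br X (A ++ Y :: B) + b • br X (A ++ Z :: B)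
  br_identity : ∀ (X : V) {n m : ℕ} (Y : Fin n → V) (Aa : Fin m → V),
    br (br X (List.ofFn Y)) (List.ofFn Aa) =
      ∑ f : Fin m → Fin (n + 1),
        br X ((List.ofFn fun i : Fin n =>
          br (Y i) (fiberList Aa f i.castSucc)) ++ fiberList Aa f (Fin.last n))

namespace PreLieExt

variable {L : Type*} [AddCommGroup L]

/-- Auxiliary version of the extension `c`, processing the list from the head
(i.e. taking the list in reversed order). -/
def cRev (circ : L → L → L) : L → List L → L
  | T, [] => T
  | T, X :: R =>
      circ (cRev circ T R) X -
        (((List.finRange R.length).map fun i => R.set i.1 (circ (R.get i) X)).attach.map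
          fun l => cRev circ T l.1).sum
  termination_by T R => R.length
  decreasing_by
  · simp
  · obtain ⟨i, -, h⟩ := List.mem_map.mp l.2
    rw [← h]
    simp

/-- The inductively defined extension `c : L → List L → L` of a binary product `∘` on `L`:
`c T [] = T`, and
`c T (A ++ [X]) = (c T A) ∘ X - Σ_{i=1}^{n} c T [X_1, …, X_{i-1}, X_i ∘ X, X_{i+1}, …, X_n]`
for `A = [X_1, …, X_n]`.  (This is the operation `T ∘ X_1 ⋯ X_n` of the paper; it is
implemented by recursion on the reversed list.) -/
def c (circ : L → L → L) (T : L) (A : List L) : L :=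
  cRev circ T A.reverse

end PreLieExt

namespace PLAux
open PreLieExt

variable {k L : Type*} [CommRing k] [AddCommGroup L] [Module k L]

/-- `Cv circ T A` is `cRev` for the bilinear product coming from `circ`. -/
def Cv (circ : L →ₗ[k] L →ₗ[k] L) (T : L) (A : List L) : L :=
  cRev (fun a b => circ a b) T A

variable (circ : L →ₗ[k] L →ₗ[k] L)

theorem Cv_nil (T : L) : Cv circ T [] = T := by rw [Cv, cRev]

theorem Cv_cons (T X : L) (R : List L) :
    Cv circ T (X :: R) = circ (Cv circ T R) X -
      ∑ i ∈ Finset.range R.length, Cv circ T (R.set i (circ (R.getD i 0) X)) := by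
  rw [Cv, cRev]
  congr 1
  rw [List.attach_map_val, List.map_map, ← List.ofFn_eq_map, List.sum_ofFn]
  calc ∑ i : Fin R.length, ((fun A => cRev (fun a b => circ a b) T A) ∘ fun i : Fin R.length =>
          R.set (↑i) (circ (R.get i) X)) i
      = ∑ i : Fin R.length,
          (fun j : ℕ => Cv circ T (R.set j (circ (R.getD j 0) X))) ↑i := by
        refine Finset.sum_congr rfl fun i _ => ?_
        simp [Cv, List.getD_eq_getElem, i.2, List.get_eq_getElem]
    _ = _ := by
        simpa using Fin.sum_univ_eq_sum_range
          (fun j : ℕ => Cv circ T (R.set j (circ (R.getD j 0) X))) R.length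

end PLAux
namespace PLAux
open PreLieExt

variable {k L : Type*} [CommRing k] [AddCommGroup L] [Module k L]
variable (circ : L →ₗ[k] L →ₗ[k] L)

/-- Multilinearity of `Cv` in each list entry. -/
theorem Cv_set (T : L) : ∀ (A : List L) (i : ℕ), i < A.length → ∀ (a c : k) (u v : L),
    Cv circ T (A.set i (a • u + c • v)) =
      a • Cv circ T (A.set i u) + c • Cv circ T (A.set i v)
  | [], i, hi => absurd hi (by simp)
  | X :: R, 0, hi => fun a c u v => by
    rw [List.set_cons_zero, List.set_cons_zero, List.set_cons_zero,
      Cv_cons, Cv_cons, Cv_cons]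
    have h1 : circ (Cv circ T R) (a • u + c • v)
        = a • circ (Cv circ T R) u + c • circ (Cv circ T R) v := by
      simp
    have h2 : ∀ i ∈ Finset.range R.length,
        Cv circ T (R.set i (circ (R.getD i 0) (a • u + c • v)))
          = a • Cv circ T (R.set i (circ (R.getD i 0) u))
            + c • Cv circ T (R.set i (circ (R.getD i 0) v)) := by
      intro i hi'
      have h3 : circ (R.getD i 0) (a • u + c • v)
          = a • circ (R.getD i 0) u + c • circ (R.getD i 0) v := by simp
      rw [h3]
      exact Cv_set T R i (Finset.mem_range.mp hi') a c _ _
    rw [h1, Finset.sum_congr rfl h2, Finset.sum_add_distrib, ← Finset.smul_sum,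
      ← Finset.smul_sum, smul_sub, smul_sub]
    abel
  | X :: R, j + 1, hi => fun a c u v => by
    have hj : j < R.length := by simpa using hi
    rw [List.set_cons_succ, List.set_cons_succ, List.set_cons_succ,
      Cv_cons, Cv_cons, Cv_cons]
    have h1 : circ (Cv circ T (R.set j (a • u + c • v))) X
        = a • circ (Cv circ T (R.set j u)) X + c • circ (Cv circ T (R.set j v)) X := by
      rw [Cv_set T R j hj a c u v]
      simp
    have hlen : ∀ w : L, (R.set j w).length = R.length := fun w => by simp
    have hjmem : j ∈ Finset.range R.length := Finset.mem_range.mpr hj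
    have hsum : ∀ w : L,
        ∑ p ∈ Finset.range R.length,
          Cv circ T ((R.set j w).set p (circ ((R.set j w).getD p 0) X))
        = ∑ p ∈ (Finset.range R.length).erase j,
            Cv circ T ((R.set j w).set p (circ ((R.set j w).getD p 0) X))
          + Cv circ T (R.set j (circ w X)) := by
      intro w
      rw [← Finset.sum_erase_add _ _ hjmem]
      congr 1
      have hg : (R.set j w).getD j 0 = w := by
        rw [List.getD_eq_getElem _ _ (by simpa using hj)]
        exact List.getElem_set_self _
      rw [hg, List.set_set]
    have hoff : ∀ p ∈ (Finset.range R.length).erase j,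
        Cv circ T ((R.set j (a • u + c • v)).set p (circ ((R.set j (a•u+c•v)).getD p 0) X))
          = a • Cv circ T ((R.set j u).set p (circ ((R.set j u).getD p 0) X))
            + c • Cv circ T ((R.set j v).set p (circ ((R.set j v).getD p 0) X)) := by
      intro p hp
      obtain ⟨hpj, hpr⟩ := Finset.mem_erase.mp hp
      have hpr' : p < R.length := Finset.mem_range.mp hpr
      have hg : ∀ w : L, (R.set j w).getD p 0 = R.getD p 0 := fun w => by
        rw [List.getD_eq_getElem _ _ (by simpa using hpr'),
          List.getD_eq_getElem _ _ hpr']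
        exact List.getElem_set_ne (fun h => hpj (h.symm)) _
      have hc : ∀ w : L, (R.set j w).set p (circ (R.getD p 0) X)
          = (R.set p (circ (R.getD p 0) X)).set j w := fun w =>
        List.set_comm _ _ (fun h => hpj h.symm)
      rw [hg, hg, hg, hc, hc, hc]
      exact Cv_set T (R.set p (circ (R.getD p 0) X)) j (by simpa using hj) a c u v
    have hd : circ (a • u + c • v) X = a • circ u X + c • circ v X := by simp
    rw [hlen, hlen, hlen, hsum, hsum, hsum, h1, Finset.sum_congr rfl hoff,
      Finset.sum_add_distrib, ← Finset.smul_sum, ← Finset.smul_sum, hd,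
      Cv_set T R j hj a c (circ u X) (circ v X), smul_sub, smul_sub, smul_add, smul_add]
    abel
  termination_by A => A.length
  decreasing_by all_goals simp_all [List.length_set]

end PLAux
namespace PLAux
open PreLieExt

variable {k L : Type*} [CommRing k] [AddCommGroup L] [Module k L]
variable (circ : L →ₗ[k] L →ₗ[k] L)

theorem Cv_set_add (T : L) (A : List L) (i : ℕ) (hi : i < A.length) (u v : L) :
    Cv circ T (A.set i (u + v)) = Cv circ T (A.set i u) + Cv circ T (A.set i v) := by
  simpa using Cv_set circ T A i hi 1 1 u v

theorem sum_erase_comm {M : Type*} [AddCommMonoid M] (n : ℕ) (H : ℕ → ℕ → M) :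
    ∑ i ∈ Finset.range n, ∑ p ∈ (Finset.range n).erase i, H i p
      = ∑ i ∈ Finset.range n, ∑ p ∈ (Finset.range n).erase i, H p i := by
  have key : ∀ K : ℕ → ℕ → M,
      ∑ i ∈ Finset.range n, ∑ p ∈ (Finset.range n).erase i, K i p
        = ∑ i ∈ Finset.range n, ∑ p ∈ Finset.range n, if p = i then 0 else K i p := by
    intro K
    refine Finset.sum_congr rfl fun i hi => ?_
    rw [← Finset.sum_erase_add _ _ hi, if_pos rfl, add_zero]
    refine Finset.sum_congr rfl fun p hp => ?_
    rw [if_neg (Finset.mem_erase.mp hp).1]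
  rw [key, key, Finset.sum_comm]
  refine Finset.sum_congr rfl fun i _ => Finset.sum_congr rfl fun p _ => ?_
  by_cases h : p = i
  · subst h; simp
  · rw [if_neg h, if_neg (fun hh => h hh.symm)]

theorem Cv_swap
    (hpl : ∀ X Y Z : L,
      circ X (circ Y Z) - circ (circ X Y) Z = circ X (circ Z Y) - circ (circ X Z) Y)
    (T : L) (R : List L) (X Y : L) :
    Cv circ T (X :: Y :: R) = Cv circ T (Y :: X :: R) := by
  set n := R.length with hn
  set d : ℕ → L := fun i => R.getD i 0 with hd
  have hdp : ∀ p, d p = R.getD p 0 := fun p => rfl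
  have expand : ∀ U W : L, Cv circ T (U :: W :: R) =
      circ (circ (Cv circ T R) W) U - circ (Cv circ T R) (circ W U)
      - ∑ i ∈ Finset.range n, circ (Cv circ T (R.set i (circ (d i) W))) U
      - ∑ i ∈ Finset.range n, circ (Cv circ T (R.set i (circ (d i) U))) W
      + ∑ i ∈ Finset.range n,
          Cv circ T (R.set i (circ (d i) (circ W U) + circ (circ (d i) U) W))
      + ∑ i ∈ Finset.range n, ∑ p ∈ (Finset.range n).erase i,
          Cv circ T ((R.set i (circ (d i) U)).set p (circ (d p) W)) := by
    intro U W
    rw [Cv_cons]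
    have hsum1 : ∑ i ∈ Finset.range (W :: R).length,
        Cv circ T ((W :: R).set i (circ ((W :: R).getD i 0) U))
        = ∑ i ∈ Finset.range n, Cv circ T (W :: R.set i (circ (d i) U))
          + Cv circ T ((circ W U) :: R) := by
      have hl : (W :: R).length = n + 1 := rfl
      rw [hl, Finset.sum_range_succ']
      simp [hd]
    rw [hsum1]
    have hstep5 : ∀ i ∈ Finset.range n, Cv circ T (W :: R.set i (circ (d i) U)) =
        circ (Cv circ T (R.set i (circ (d i) U))) W
        - (∑ p ∈ (Finset.range n).erase i,
            Cv circ T ((R.set i (circ (d i) U)).set p (circ (d p) W))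
          + Cv circ T (R.set i (circ (circ (d i) U) W))) := by
      intro i hi
      have hi' : i < n := Finset.mem_range.mp hi
      rw [Cv_cons]
      congr 1
      have hlen : (R.set i (circ (d i) U)).length = n := by simp [hn]
      rw [hlen, ← Finset.sum_erase_add _ _ hi]
      congr 1
      · refine Finset.sum_congr rfl fun p hp => ?_
        obtain ⟨hpi, hpr⟩ := Finset.mem_erase.mp hp
        have hpr' : p < n := Finset.mem_range.mp hpr
        have hgd : (R.set i (circ (d i) U)).getD p 0 = d p := by
          rw [List.getD_eq_getElem _ _ (by simpa using hpr'),
            List.getElem_set_ne (show i ≠ p from fun h => hpi h.symm), hdp]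
          exact (List.getD_eq_getElem _ _ hpr').symm
        rw [hgd]
      · have hgd : (R.set i (circ (d i) U)).getD i 0 = circ (d i) U := by
          rw [List.getD_eq_getElem _ _ (by simpa using hi')]
          exact List.getElem_set_self _
        rw [hgd, List.set_set]
    rw [Finset.sum_congr rfl hstep5]
    have hs2 : Cv circ T ((circ W U) :: R) = circ (Cv circ T R) (circ W U)
        - ∑ i ∈ Finset.range n, Cv circ T (R.set i (circ (d i) (circ W U))) := by
      rw [Cv_cons]
    have hs3 : circ (Cv circ T (W :: R)) U
        = circ (circ (Cv circ T R) W) U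
          - ∑ i ∈ Finset.range n, circ (Cv circ T (R.set i (circ (d i) W))) U := by
      rw [Cv_cons circ T W R, map_sub, LinearMap.sub_apply, map_sum, LinearMap.sum_apply]
    rw [hs2, hs3]
    have hmerge : ∑ i ∈ Finset.range n,
        Cv circ T (R.set i (circ (d i) (circ W U) + circ (circ (d i) U) W))
        = ∑ i ∈ Finset.range n, (Cv circ T (R.set i (circ (d i) (circ W U)))
            + Cv circ T (R.set i (circ (circ (d i) U) W))) := by
      refine Finset.sum_congr rfl fun i hi => ?_
      exact Cv_set_add circ T R i (Finset.mem_range.mp hi) _ _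
    rw [hmerge, Finset.sum_add_distrib, Finset.sum_sub_distrib, Finset.sum_add_distrib]
    abel
  rw [expand X Y, expand Y X]
  have h1 : circ (circ (Cv circ T R) Y) X - circ (Cv circ T R) (circ Y X)
      = circ (circ (Cv circ T R) X) Y - circ (Cv circ T R) (circ X Y) := by
    have h := congrArg Neg.neg (hpl (Cv circ T R) Y X)
    simpa [neg_sub] using h
  have h3 : ∀ i ∈ Finset.range n,
      Cv circ T (R.set i (circ (d i) (circ Y X) + circ (circ (d i) X) Y))
        = Cv circ T (R.set i (circ (d i) (circ X Y) + circ (circ (d i) Y) X)) := by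
    intro i _
    refine congrArg (fun e => Cv circ T (R.set i e)) ?_
    have h := hpl (d i) Y X
    rw [sub_eq_sub_iff_add_eq_add] at h
    exact h
  have h4 : ∑ i ∈ Finset.range n, ∑ p ∈ (Finset.range n).erase i,
      Cv circ T ((R.set i (circ (d i) X)).set p (circ (d p) Y))
      = ∑ i ∈ Finset.range n, ∑ p ∈ (Finset.range n).erase i,
        Cv circ T ((R.set i (circ (d i) Y)).set p (circ (d p) X)) := by
    have hcomm : ∀ i ∈ Finset.range n, ∀ p ∈ (Finset.range n).erase i,
        Cv circ T ((R.set i (circ (d i) X)).set p (circ (d p) Y))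
          = Cv circ T ((R.set p (circ (d p) Y)).set i (circ (d i) X)) := by
      intro i _ p hp
      rw [List.set_comm _ _ (fun h => (Finset.mem_erase.mp hp).1 h.symm)]
    rw [Finset.sum_congr rfl fun i hi => Finset.sum_congr rfl (hcomm i hi)]
    exact sum_erase_comm n _
  rw [h1, Finset.sum_congr rfl h3, h4]
  abel

end PLAux
namespace PLAux
open PreLieExt

variable {k L : Type*} [CommRing k] [AddCommGroup L] [Module k L]
variable (circ : L →ₗ[k] L →ₗ[k] L)

theorem set_perm : ∀ (A : List L) (i : ℕ), i < A.length → ∀ w : L,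
    (A.set i w).Perm (w :: A.eraseIdx i) := by
  intro A i hi w
  rw [List.set_eq_take_cons_drop _ hi, List.eraseIdx_eq_take_drop_succ]
  exact List.perm_middle

/-- Key combinatorial lemma: a sum over positions of a perm-invariant function of
(entry, rest) is invariant under permutation of the list. -/
theorem sum_eraseIdx_perm {M : Type*} [AddCommMonoid M] :
    ∀ {A A' : List L}, A.Perm A' → ∀ (g : L → List L → M),
      (∀ (y : L) (l l' : List L), l.length < A.length → l.Perm l' → g y l = g y l') →
      ∑ i ∈ Finset.range A.length, g (A.getD i 0) (A.eraseIdx i)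
        = ∑ i ∈ Finset.range A'.length, g (A'.getD i 0) (A'.eraseIdx i) := by
  intro A A' h
  induction h with
  | nil => intro g hg; rfl
  | @cons x A A' hA ih =>
    intro g hg
    have hl : ∀ (B : List L), ∑ i ∈ Finset.range (x :: B).length,
        g ((x :: B).getD i 0) ((x :: B).eraseIdx i)
        = ∑ i ∈ Finset.range B.length, g (B.getD i 0) (x :: B.eraseIdx i) + g x B := by
      intro B
      have : (x :: B).length = B.length + 1 := rfl
      rw [this, Finset.sum_range_succ']
      rfl
    rw [hl A, hl A']
    have h1 : g x A = g x A' := hg x A A' (by simp) hA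
    have h2 := ih (fun y l => g y (x :: l)) (fun y l l' hlen hp =>
      hg y (x :: l) (x :: l') (by simpa using Nat.succ_lt_succ hlen) (hp.cons x))
    rw [h1, h2]
  | @swap x y A =>
    intro g hg
    have hl : ∀ (u v : L), ∑ i ∈ Finset.range (u :: v :: A).length,
        g ((u :: v :: A).getD i 0) ((u :: v :: A).eraseIdx i)
        = ∑ i ∈ Finset.range A.length, g (A.getD i 0) (u :: v :: A.eraseIdx i)
          + g v (u :: A) + g u (v :: A) := by
      intro u v
      have h1 : (u :: v :: A).length = A.length + 1 + 1 := rfl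
      rw [h1, Finset.sum_range_succ', Finset.sum_range_succ']
      rfl
    rw [hl, hl]
    have h2 : ∀ i ∈ Finset.range A.length,
        g (A.getD i 0) (y :: x :: A.eraseIdx i) = g (A.getD i 0) (x :: y :: A.eraseIdx i) := by
      intro i hi
      have hi' := Finset.mem_range.mp hi
      refine hg _ _ _ ?_ (List.Perm.swap x y _)
      have : (A.eraseIdx i).length < A.length := by
        simp only [List.length_eraseIdx, if_pos hi']
        omega
      simpa using Nat.succ_lt_succ (Nat.succ_lt_succ this)
    rw [Finset.sum_congr rfl h2]
    abel
  | @trans A B C h1 h2 ih1 ih2 =>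
    intro g hg
    rw [ih1 g hg, ih2 g (fun y l l' hlen hp => hg y l l' (by rwa [h1.length_eq]) hp)]

theorem Cv_perm_aux
    (hpl : ∀ X Y Z : L,
      circ X (circ Y Z) - circ (circ X Y) Z = circ X (circ Z Y) - circ (circ X Z) Y)
    (T : L) : ∀ (N : ℕ) {A A' : List L}, A.length ≤ N → A.Perm A' →
      Cv circ T A = Cv circ T A' := by
  intro N
  induction N with
  | zero =>
    intro A A' hlen hp
    have : A = [] := List.length_eq_zero_iff.mp (Nat.le_zero.mp hlen)
    subst this
    rw [hp.nil_eq]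
  | succ N IH =>
    intro A A' hlen hp
    induction hp with
    | nil => rfl
    | @cons x A A' hA ih =>
      have hlen' : A.length ≤ N := by simpa using hlen
      rw [Cv_cons, Cv_cons]
      have hCv : Cv circ T A = Cv circ T A' := IH hlen' hA
      rw [hCv]
      congr 1
      have hconv : ∀ (B : List L), B.length ≤ N →
          ∑ i ∈ Finset.range B.length, Cv circ T (B.set i (circ (B.getD i 0) x))
          = ∑ i ∈ Finset.range B.length,
              (fun y l => Cv circ T ((circ y x) :: l)) (B.getD i 0) (B.eraseIdx i) := by
        intro B hB
        refine Finset.sum_congr rfl fun i hi => ?_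
        have hi' : i < B.length := Finset.mem_range.mp hi
        exact IH (by simpa using hB) (set_perm B i hi' _)
      rw [hconv A hlen', hconv A' (by rwa [← hA.length_eq])]
      refine sum_eraseIdx_perm (M := L) hA (fun y l => Cv circ T ((circ y x) :: l)) (fun y l l' hll hp' => ?_)
      exact IH (by simpa using le_trans (Nat.succ_le_of_lt hll) hlen') (hp'.cons _)
    | @swap x y A => exact Cv_swap circ hpl T A y x
    | @trans A B C h1 h2 ih1 ih2 =>
      exact (ih1 hlen).trans (ih2 (by rwa [← h1.length_eq]))

theorem Cv_perm
    (hpl : ∀ X Y Z : L,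
      circ X (circ Y Z) - circ (circ X Y) Z = circ X (circ Z Y) - circ (circ X Z) Y)
    (T : L) {A A' : List L} (h : A.Perm A') : Cv circ T A = Cv circ T A' :=
  Cv_perm_aux circ hpl T A.length le_rfl h

theorem c_eq_Cv
    (hpl : ∀ X Y Z : L,
      circ X (circ Y Z) - circ (circ X Y) Z = circ X (circ Z Y) - circ (circ X Z) Y)
    (T : L) (A : List L) : c (fun a b : L => circ a b) T A = Cv circ T A :=
  Cv_perm circ hpl T A.reverse_perm

theorem Cv_smul_add (a c : k) (T T' : L) :
    ∀ (A : List L), Cv circ (a • T + c • T') A = a • Cv circ T A + c • Cv circ T' A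
  | [] => by rw [Cv_nil, Cv_nil, Cv_nil]
  | X :: R => by
    rw [Cv_cons, Cv_cons, Cv_cons, Cv_smul_add a c T T' R]
    have h1 : ∀ i ∈ Finset.range R.length,
        Cv circ (a • T + c • T') (R.set i (circ (R.getD i 0) X))
          = a • Cv circ T (R.set i (circ (R.getD i 0) X))
            + c • Cv circ T' (R.set i (circ (R.getD i 0) X)) := fun i _ =>
      Cv_smul_add a c T T' _
    rw [Finset.sum_congr rfl h1, Finset.sum_add_distrib, ← Finset.smul_sum, ← Finset.smul_sum]
    simp only [map_add, map_smul, LinearMap.add_apply, LinearMap.smul_apply]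
    rw [smul_sub, smul_sub]
    abel
  termination_by A => A.length
  decreasing_by all_goals simp_all [List.length_set]

end PLAux
namespace PLAux
open PreLieExt

theorem ofFn_set {V : Type*} {n : ℕ} (f : Fin n → V) (i : Fin n) (w : V) :
    (List.ofFn f).set i w = List.ofFn (Function.update f i w) := by
  apply List.ext_getElem
  · simp
  · intro j h1 h2
    simp only [List.getElem_set, List.getElem_ofFn]
    simp only [List.length_set, List.length_ofFn] at h1 h2
    rcases eq_or_ne (i : ℕ) j with h | h
    · rw [if_pos h, Function.update_apply, if_pos (by ext; simp [h.symm])]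
    · rw [if_neg h, Function.update_apply, if_neg (by intro hh; exact h (by rw [← hh]))]

theorem map_update_not_mem {ι V : Type*} [DecidableEq ι] (B : ι → V) (i : ι) (w : V)
    (s : List ι) (h : i ∉ s) : s.map (Function.update B i w) = s.map B :=
  List.map_congr_left fun a ha => Function.update_of_ne (fun hh => h (by rw [← hh]; exact ha)) _ _

theorem map_update_set {ι V : Type*} [DecidableEq ι] (B : ι → V) (w : V) :
    ∀ (s : List ι), s.Nodup → ∀ (p : ℕ) (hp : p < s.length),
      s.map (Function.update B (s[p]) w) = (s.map B).set p w
  | [], _, p, hp => absurd hp (by simp)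
  | a :: s, hnd, 0, hp => by
    simp only [List.map_cons, List.getElem_cons_zero, List.set_cons_zero]
    rw [Function.update_self, map_update_not_mem B a w s (by simpa using (List.nodup_cons.mp hnd).1)]
  | a :: s, hnd, p + 1, hp => by
    obtain ⟨hna, hnd'⟩ := List.nodup_cons.mp hnd
    have hp' : p < s.length := by simpa using hp
    simp only [List.map_cons, List.getElem_cons_succ, List.set_cons_succ]
    rw [Function.update_of_ne (fun hh => hna (by rw [hh]; exact s.getElem_mem hp')) _ _,
      map_update_set B w s hnd' p hp']

theorem sum_map_set {ι V M : Type*} [DecidableEq ι] [AddCommMonoid M] (B : ι → V) (h : V → V)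
    (d : V) : ∀ (s : List ι), s.Nodup → ∀ (F : List V → M),
    ∑ p ∈ Finset.range (s.map B).length, F ((s.map B).set p (h ((s.map B).getD p d)))
      = ∑ i ∈ s.toFinset, F (s.map (Function.update B i (h (B i))))
  | [], _, F => by simp
  | a :: s, hnd, F => by
    obtain ⟨hna, hnd'⟩ := List.nodup_cons.mp hnd
    have hlen : ((a :: s).map B).length = (s.map B).length + 1 := by simp
    rw [hlen, Finset.sum_range_succ']
    have h0 : F (((a :: s).map B).set 0 (h (((a :: s).map B).getD 0 d)))
        = F ((a :: s).map (Function.update B a (h (B a)))) := by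
      simp only [List.map_cons, List.set_cons_zero, List.getD_cons_zero]
      rw [Function.update_self, map_update_not_mem B a _ s hna]
    have hsucc : ∀ p, ((a :: s).map B).set (p + 1) (h (((a :: s).map B).getD (p + 1) d))
        = B a :: (s.map B).set p (h ((s.map B).getD p d)) := by
      intro p
      simp only [List.map_cons, List.set_cons_succ, List.getD_cons_succ]
    have hIH := sum_map_set B h d s hnd' (fun t => F (B a :: t))
    have hterm : ∀ i ∈ s.toFinset, F (B a :: s.map (Function.update B i (h (B i))))
        = F ((a :: s).map (Function.update B i (h (B i)))) := by
      intro i hi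
      have hia : a ≠ i := fun hh => hna (by rw [hh]; exact List.mem_toFinset.mp hi)
      simp only [List.map_cons]
      rw [Function.update_of_ne hia]
    rw [Finset.sum_congr rfl (fun p _ => by rw [hsucc p]), hIH,
      Finset.sum_congr rfl hterm, h0]
    have hins : (a :: s).toFinset = insert a s.toFinset := by simp
    rw [hins, Finset.sum_insert (by simpa using hna), add_comm]

theorem sum_set_append {V M : Type*} [AddCommMonoid M] (h : V → V) (d : V) :
    ∀ (P Q : List V) (F : List V → M),
    ∑ p ∈ Finset.range (P ++ Q).length, F ((P ++ Q).set p (h ((P ++ Q).getD p d)))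
      = ∑ p ∈ Finset.range P.length, F ((P.set p (h (P.getD p d))) ++ Q)
        + ∑ q ∈ Finset.range Q.length, F (P ++ Q.set q (h (Q.getD q d)))
  | [], Q, F => by simp
  | a :: P, Q, F => by
    have hlen : ((a :: P) ++ Q).length = (P ++ Q).length + 1 := by simp
    rw [hlen, Finset.sum_range_succ', show (a :: P).length = P.length + 1 from rfl,
      Finset.sum_range_succ']
    simp only [List.cons_append, List.set_cons_succ, List.set_cons_zero,
      List.getD_cons_succ, List.getD_cons_zero]
    have hIH := sum_set_append h d P Q (fun t => F (a :: t))
    rw [hIH]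
    abel

theorem fiberList_succ {V : Type*} {m n : ℕ} (Aa : Fin (m + 1) → V) (f : Fin (m + 1) → Fin n)
    (i : Fin n) :
    fiberList Aa f i
      = (if f 0 = i then [Aa 0] else [])
        ++ fiberList (fun j => Aa j.succ) (fun j => f j.succ) i := by
  unfold fiberList
  rw [List.finRange_succ, List.filter_cons, List.filter_map]
  by_cases h : f 0 = i
  · rw [if_pos (by simpa using h), if_pos h]
    simp [List.map_map, Function.comp_def]
  · rw [if_neg (by simpa using h), if_neg h]
    simp [List.map_map, Function.comp_def]

theorem filter_univ_eq_toFinset {m : ℕ} {β : Type*} [DecidableEq β] (g : Fin m → β) (l : β) :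
    Finset.univ.filter (fun i => g i = l)
      = ((List.finRange m).filter (fun j => g j = l)).toFinset := by
  ext i
  simp [List.mem_filter]

end PLAux
namespace PLAux
open PreLieExt

variable {k L : Type*} [CommRing k] [AddCommGroup L] [Module k L]
variable (circ : L →ₗ[k] L →ₗ[k] L)

theorem key
    (hpl : ∀ X Y Z : L,
      circ X (circ Y Z) - circ (circ X Y) Z = circ X (circ Z Y) - circ (circ X Z) Y)
    (X x : L) {n m : ℕ} (Y : Fin n → L) (B : Fin m → L) (g : Fin m → Fin (n + 1)) :
    circ (Cv circ X ((List.ofFn fun j : Fin n => Cv circ (Y j) (fiberList B g j.castSucc))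
        ++ fiberList B g (Fin.last n))) x
      - ∑ i : Fin m, Cv circ X
          ((List.ofFn fun j : Fin n => Cv circ (Y j)
              (fiberList (Function.update B i (circ (B i) x)) g j.castSucc))
            ++ fiberList (Function.update B i (circ (B i) x)) g (Fin.last n))
      = ∑ v : Fin (n + 1), Cv circ X
          ((List.ofFn fun j : Fin n => Cv circ (Y j)
              ((if v = j.castSucc then [x] else []) ++ fiberList B g j.castSucc))
            ++ ((if v = Fin.last n then [x] else []) ++ fiberList B g (Fin.last n))) := by
  classical
  set S : List L := List.ofFn (fun j : Fin n => Cv circ (Y j) (fiberList B g j.castSucc))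
    with hS
  set Fg : List L := fiberList B g (Fin.last n) with hFg
  have hSlen : S.length = n := by rw [hS]; exact List.length_ofFn
  have hwS : ∀ w : Fin n, (w : ℕ) < S.length := fun w => by rw [hSlen]; exact w.2
  have hwlt : ∀ w : Fin n, (w : ℕ) < (S ++ Fg).length := fun w => by
    rw [List.length_append]; exact Nat.lt_of_lt_of_le (hwS w) (Nat.le_add_right _ _)
  have hsetap : ∀ (w : Fin n) (u : L), S.set ↑w u ++ Fg = (S ++ Fg).set ↑w u := fun w u =>
    (List.set_append_left _ _ (hwS w)).symm
  have hadd : ∀ (w : Fin n) (u v : L), Cv circ X ((S ++ Fg).set ↑w (u + v))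
      = Cv circ X ((S ++ Fg).set ↑w u) + Cv circ X ((S ++ Fg).set ↑w v) := fun w u v =>
    Cv_set_add circ X (S ++ Fg) w (hwlt w) u v
  have hmapsum : ∀ (w : Fin n) (s : Finset ℕ) (t : ℕ → L),
      Cv circ X ((S ++ Fg).set ↑w (∑ p ∈ s, t p))
        = ∑ p ∈ s, Cv circ X ((S ++ Fg).set ↑w (t p)) :=
    fun w s t => map_sum (AddMonoidHom.mk' (fun u => Cv circ X ((S ++ Fg).set ↑w u))
      (fun u v => hadd w u v)) t s
  -- Step A : unfold the outer product
  have hA : circ (Cv circ X (S ++ Fg)) x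
      = Cv circ X (x :: (S ++ Fg)) + ∑ p ∈ Finset.range (S ++ Fg).length,
          Cv circ X ((S ++ Fg).set p (circ ((S ++ Fg).getD p 0) x)) := by
    rw [Cv_cons circ X x (S ++ Fg)]; abel
  -- Step B : split the position sum over the append
  have hB := sum_set_append (V := L) (M := L) (fun t => circ t x) 0 S Fg
    (fun t => Cv circ X t)
  -- Step C : rework the S-side position sum
  have hC : ∑ p ∈ Finset.range S.length, Cv circ X ((S.set p (circ (S.getD p 0) x)) ++ Fg)
      = ∑ w : Fin n,
          (Cv circ X ((S ++ Fg).set ↑w (Cv circ (Y w) (x :: fiberList B g w.castSucc)))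
            + ∑ p ∈ Finset.range (fiberList B g w.castSucc).length,
                Cv circ X ((S ++ Fg).set ↑w (Cv circ (Y w)
                  ((fiberList B g w.castSucc).set p
                    (circ ((fiberList B g w.castSucc).getD p 0) x))))) := by
    rw [hSlen, ← Fin.sum_univ_eq_sum_range
      (fun p => Cv circ X ((S.set p (circ (S.getD p 0) x)) ++ Fg)) n]
    refine Finset.sum_congr rfl fun w _ => ?_
    have hgetD : S.getD ↑w 0 = Cv circ (Y w) (fiberList B g w.castSucc) := by
      rw [hS, List.getD_eq_getElem _ _ (by simpa using w.2), List.getElem_ofFn]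
    have hu : circ (Cv circ (Y w) (fiberList B g w.castSucc)) x
        = Cv circ (Y w) (x :: fiberList B g w.castSucc)
          + ∑ p ∈ Finset.range (fiberList B g w.castSucc).length,
              Cv circ (Y w) ((fiberList B g w.castSucc).set p
                (circ ((fiberList B g w.castSucc).getD p 0) x)) := by
      rw [Cv_cons]; abel
    rw [hgetD, hsetap, hu, hadd w]
    congr 1
    exact hmapsum w _ _
  -- the uniform wrapper for step D
  set Fl : Fin (n + 1) → List L → L := fun l t =>
    Cv circ X ((List.ofFn fun j : Fin n =>
        Cv circ (Y j) (if j.castSucc = l then t else fiberList B g j.castSucc))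
      ++ (if Fin.last n = l then t else Fg)) with hFl
  have hfl1 : ∀ (w : Fin n) (t : List L),
      Fl w.castSucc t = Cv circ X ((S ++ Fg).set ↑w (Cv circ (Y w) t)) := by
    intro w t
    rw [hFl]
    have h1 : (List.ofFn fun j : Fin n =>
          Cv circ (Y j) (if j.castSucc = w.castSucc then t else fiberList B g j.castSucc))
        = S.set ↑w (Cv circ (Y w) t) := by
      rw [hS, ofFn_set]
      refine congrArg List.ofFn (funext fun j => ?_)
      rcases eq_or_ne j w with hj | hj
      · subst hj; rw [if_pos rfl, Function.update_self]
      · rw [if_neg (fun hh => hj (Fin.castSucc_injective _ hh)), Function.update_of_ne hj]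
    simp only []
    rw [if_neg (Fin.castSucc_lt_last w).ne', h1, hsetap]
  have hfl2 : ∀ t : List L, Fl (Fin.last n) t = Cv circ X (S ++ t) := by
    intro t
    rw [hFl]
    simp only []
    have h1 : (List.ofFn fun j : Fin n =>
          Cv circ (Y j) (if j.castSucc = Fin.last n then t else fiberList B g j.castSucc))
        = S := by
      rw [hS]
      refine congrArg List.ofFn (funext fun j => ?_)
      rw [if_neg (Fin.castSucc_lt_last j).ne]
    rw [h1, if_pos trivial]
  -- Step D : the i-sum, grouped along the fibers of g
  have hD : (∑ i : Fin m, Cv circ X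
        ((List.ofFn fun j : Fin n => Cv circ (Y j)
            (fiberList (Function.update B i (circ (B i) x)) g j.castSucc))
          ++ fiberList (Function.update B i (circ (B i) x)) g (Fin.last n)))
      = (∑ w : Fin n, ∑ p ∈ Finset.range (fiberList B g w.castSucc).length,
            Cv circ X ((S ++ Fg).set ↑w (Cv circ (Y w)
              ((fiberList B g w.castSucc).set p
                (circ ((fiberList B g w.castSucc).getD p 0) x)))))
        + ∑ q ∈ Finset.range Fg.length, Cv circ X (S ++ Fg.set q (circ (Fg.getD q 0) x)) := by
    have hstep : ∀ l : Fin (n + 1), ∀ i ∈ Finset.univ.filter (fun i : Fin m => g i = l),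
        Cv circ X ((List.ofFn fun j : Fin n => Cv circ (Y j)
            (fiberList (Function.update B i (circ (B i) x)) g j.castSucc))
          ++ fiberList (Function.update B i (circ (B i) x)) g (Fin.last n))
        = Fl l (((List.finRange m).filter (fun j => g j = l)).map
            (Function.update B i (circ (B i) x))) := by
      intro l i hi
      have hgi : g i = l := (Finset.mem_filter.mp hi).2
      have e1 : ∀ j : Fin n,
          Cv circ (Y j) (fiberList (Function.update B i (circ (B i) x)) g j.castSucc)
          = Cv circ (Y j) (if j.castSucc = l
              then ((List.finRange m).filter (fun j' => g j' = l)).map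
                (Function.update B i (circ (B i) x))
              else fiberList B g j.castSucc) := by
        intro j
        by_cases hj : j.castSucc = l
        · rw [if_pos hj, hj]; rfl
        · rw [if_neg hj]
          congr 1
          show ((List.finRange m).filter (fun j' => g j' = j.castSucc)).map
              (Function.update B i (circ (B i) x)) = _
          rw [map_update_not_mem]
          · rfl
          · intro hmem
            have h2 : g i = j.castSucc := by simpa using (List.mem_filter.mp hmem).2
            exact hj (by rw [← h2]; exact hgi)
      have e2 : fiberList (Function.update B i (circ (B i) x)) g (Fin.last n)
          = if Fin.last n = l
              then ((List.finRange m).filter (fun j' => g j' = l)).map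
                (Function.update B i (circ (B i) x))
              else Fg := by
        by_cases hl : Fin.last n = l
        · rw [if_pos hl, hl]; rfl
        · rw [if_neg hl]
          show ((List.finRange m).filter (fun j' => g j' = Fin.last n)).map
              (Function.update B i (circ (B i) x)) = Fg
          rw [map_update_not_mem]
          · rw [hFg]; rfl
          · intro hmem
            have h2 : g i = Fin.last n := by simpa using (List.mem_filter.mp hmem).2
            exact hl (by rw [← h2]; exact hgi)
      rw [hFl]
      simp only [e1, e2]
    calc (∑ i : Fin m, Cv circ X
          ((List.ofFn fun j : Fin n => Cv circ (Y j)
              (fiberList (Function.update B i (circ (B i) x)) g j.castSucc))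
            ++ fiberList (Function.update B i (circ (B i) x)) g (Fin.last n)))
        = ∑ l : Fin (n + 1), ∑ i ∈ Finset.univ.filter (fun i : Fin m => g i = l),
            Cv circ X ((List.ofFn fun j : Fin n => Cv circ (Y j)
                (fiberList (Function.update B i (circ (B i) x)) g j.castSucc))
              ++ fiberList (Function.update B i (circ (B i) x)) g (Fin.last n)) :=
          (Finset.sum_fiberwise Finset.univ g _).symm
      _ = ∑ l : Fin (n + 1), ∑ p ∈ Finset.range (fiberList B g l).length,
            Fl l ((fiberList B g l).set p (circ ((fiberList B g l).getD p 0) x)) := by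
          refine Finset.sum_congr rfl fun l _ => ?_
          rw [Finset.sum_congr rfl (hstep l), filter_univ_eq_toFinset g l]
          have h3 := (sum_map_set B (fun t => circ t x) 0
            ((List.finRange m).filter (fun j => g j = l))
            ((List.nodup_finRange m).filter _) (Fl l)).symm
          exact h3
      _ = _ := by
          rw [Fin.sum_univ_castSucc]
          congr 1
          · refine Finset.sum_congr rfl fun w _ => Finset.sum_congr rfl fun p _ => ?_
            rw [hfl1]
          · refine Finset.sum_congr rfl fun q _ => ?_
            rw [hfl2]
  -- Step E : identify the right-hand side
  have hpsi1 : ∀ w : Fin n,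
      Cv circ X ((List.ofFn fun j : Fin n => Cv circ (Y j)
          ((if w.castSucc = j.castSucc then [x] else []) ++ fiberList B g j.castSucc))
        ++ ((if w.castSucc = Fin.last n then [x] else []) ++ Fg))
      = Cv circ X ((S ++ Fg).set ↑w (Cv circ (Y w) (x :: fiberList B g w.castSucc))) := by
    intro w
    rw [if_neg (Fin.castSucc_lt_last w).ne, List.nil_append]
    have h1 : (List.ofFn fun j : Fin n => Cv circ (Y j)
          ((if w.castSucc = j.castSucc then [x] else []) ++ fiberList B g j.castSucc))
        = S.set ↑w (Cv circ (Y w) (x :: fiberList B g w.castSucc)) := by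
      rw [hS, ofFn_set]
      refine congrArg List.ofFn (funext fun j => ?_)
      rcases eq_or_ne j w with hj | hj
      · subst hj; rw [if_pos rfl, Function.update_self, List.singleton_append]
      · rw [if_neg (fun hh => hj (Fin.castSucc_injective _ hh.symm)),
          Function.update_of_ne hj, List.nil_append]
    rw [h1, hsetap]
  have hpsi2 :
      Cv circ X ((List.ofFn fun j : Fin n => Cv circ (Y j)
          ((if Fin.last n = j.castSucc then [x] else []) ++ fiberList B g j.castSucc))
        ++ ((if Fin.last n = Fin.last n then [x] else []) ++ Fg))
      = Cv circ X (x :: (S ++ Fg)) := by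
    rw [if_pos rfl, List.singleton_append]
    have h1 : (List.ofFn fun j : Fin n => Cv circ (Y j)
          ((if Fin.last n = j.castSucc then [x] else []) ++ fiberList B g j.castSucc))
        = S := by
      rw [hS]
      refine congrArg List.ofFn (funext fun j => ?_)
      rw [if_neg (Fin.castSucc_lt_last j).ne', List.nil_append]
    rw [h1]
    exact Cv_perm circ hpl X List.perm_middle
  rw [hA, hB, hC, hD, Fin.sum_univ_castSucc, Finset.sum_congr rfl (fun w _ => hpsi1 w),
    hpsi2, Finset.sum_add_distrib]
  abel

end PLAux
namespace PLAux
open PreLieExt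

variable {k L : Type*} [CommRing k] [AddCommGroup L] [Module k L]
variable (circ : L →ₗ[k] L →ₗ[k] L)

theorem Cv_identity
    (hpl : ∀ X Y Z : L,
      circ X (circ Y Z) - circ (circ X Y) Z = circ X (circ Z Y) - circ (circ X Z) Y)
    (X : L) {n : ℕ} (Y : Fin n → L) :
    ∀ {m : ℕ} (Aa : Fin m → L),
    Cv circ (Cv circ X (List.ofFn Y)) (List.ofFn Aa)
      = ∑ f : Fin m → Fin (n + 1), Cv circ X
          ((List.ofFn fun i : Fin n => Cv circ (Y i) (fiberList Aa f i.castSucc))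
            ++ fiberList Aa f (Fin.last n)) := by
  intro m
  induction m with
  | zero =>
    intro Aa
    rw [List.ofFn_zero, Cv_nil]
    rw [Fintype.sum_subsingleton _ (fun i : Fin 0 => i.elim0)]
    have hf : ∀ l : Fin (n + 1), fiberList Aa (fun i : Fin 0 => i.elim0) l = [] := by
      intro l
      simp [fiberList]
    simp only [hf, List.append_nil]
    have h1 : (fun i : Fin n => Cv circ (Y i) []) = Y := funext fun i => Cv_nil circ (Y i)
    rw [h1]
  | succ m IH =>
    intro Aa
    rw [List.ofFn_succ, Cv_cons]
    have hconv : ∑ p ∈ Finset.range (List.ofFn fun j : Fin m => Aa j.succ).length,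
        Cv circ (Cv circ X (List.ofFn Y)) ((List.ofFn fun j : Fin m => Aa j.succ).set p
          (circ ((List.ofFn fun j : Fin m => Aa j.succ).getD p 0) (Aa 0)))
        = ∑ i : Fin m, Cv circ (Cv circ X (List.ofFn Y))
            (List.ofFn (Function.update (fun j : Fin m => Aa j.succ) i
              (circ (Aa i.succ) (Aa 0)))) := by
      rw [List.length_ofFn, ← Fin.sum_univ_eq_sum_range
        (fun p => Cv circ (Cv circ X (List.ofFn Y)) ((List.ofFn fun j : Fin m => Aa j.succ).set p
          (circ ((List.ofFn fun j : Fin m => Aa j.succ).getD p 0) (Aa 0)))) m]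
      refine Finset.sum_congr rfl fun i _ => ?_
      rw [List.getD_eq_getElem _ _ (by simpa using i.2), List.getElem_ofFn, ofFn_set]
    rw [hconv, IH (fun j : Fin m => Aa j.succ),
      Finset.sum_congr rfl (fun (i : Fin m) (_ : i ∈ Finset.univ) =>
        IH (Function.update (fun j : Fin m => Aa j.succ) i (circ (Aa i.succ) (Aa 0)))),
      map_sum, LinearMap.sum_apply, Finset.sum_comm, ← Finset.sum_sub_distrib]
    have hkey : ∀ g : Fin m → Fin (n + 1),
        circ (Cv circ X ((List.ofFn fun j : Fin n =>
            Cv circ (Y j) (fiberList (fun j' : Fin m => Aa j'.succ) g j.castSucc))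
          ++ fiberList (fun j' : Fin m => Aa j'.succ) g (Fin.last n))) (Aa 0)
        - ∑ i : Fin m, Cv circ X
            ((List.ofFn fun j : Fin n => Cv circ (Y j)
                (fiberList (Function.update (fun j' : Fin m => Aa j'.succ) i
                  (circ (Aa i.succ) (Aa 0))) g j.castSucc))
              ++ fiberList (Function.update (fun j' : Fin m => Aa j'.succ) i
                  (circ (Aa i.succ) (Aa 0))) g (Fin.last n))
        = ∑ v : Fin (n + 1), Cv circ X
            ((List.ofFn fun j : Fin n => Cv circ (Y j)
                ((if v = j.castSucc then [Aa 0] else [])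
                  ++ fiberList (fun j' : Fin m => Aa j'.succ) g j.castSucc))
              ++ ((if v = Fin.last n then [Aa 0] else [])
                  ++ fiberList (fun j' : Fin m => Aa j'.succ) g (Fin.last n))) := by
      intro g
      exact key circ hpl X (Aa 0) Y (fun j' : Fin m => Aa j'.succ) g
    rw [Finset.sum_congr rfl (fun g (_ : g ∈ Finset.univ) => hkey g)]
    -- now identify with the sum over all f : Fin (m+1) → Fin (n+1)
    rw [← Equiv.sum_comp (Fin.consEquiv fun _ : Fin (m + 1) => Fin (n + 1))
      (fun f : Fin (m + 1) → Fin (n + 1) => Cv circ X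
        ((List.ofFn fun i : Fin n => Cv circ (Y i) (fiberList Aa f i.castSucc))
          ++ fiberList Aa f (Fin.last n))), Fintype.sum_prod_type, Finset.sum_comm]
    refine Finset.sum_congr rfl fun v _ => Finset.sum_congr rfl fun g _ => ?_
    have hf : ∀ l : Fin (n + 1), fiberList Aa (Fin.cons v g) l
        = (if v = l then [Aa 0] else [])
          ++ fiberList (fun j' : Fin m => Aa j'.succ) g l := by
      intro l
      rw [fiberList_succ]
      simp [Fin.cons_zero, Fin.cons_succ]
    simp only [Fin.consEquiv, Equiv.coe_fn_mk, hf]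
  termination_by m => m

end PLAux


open PreLieExt in
/-- Let `k` be a commutative ring and `(L, ∘)` a pre-Lie algebra over `k`.
Let `c : L → List L → L` be the inductively defined extension of `∘` and define
`X⟨Y_1, …, Y_n⟩ := c X [Y_1, …, Y_n]`.  Then these operations form a symmetric brace algebra
structure on `L`: they are `k`-linear in each argument, invariant under permutations of the
`Y`'s, satisfy `X⟨⟩ = X`, and satisfy the symmetric brace identity. -/
theorem preLie_gives_symBrace
    (k L : Type*) [CommRing k] [AddCommGroup L] [Module k L]
    (circ : L →ₗ[k] L →ₗ[k] L)
    (hpl : ∀ X Y Z : L,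
      circ X (circ Y Z) - circ (circ X Y) Z = circ X (circ Z Y) - circ (circ X Z) Y)
    (br : L → List L → L)
    (hbr : ∀ (X : L) (A : List L), br X A = c (fun a b : L => circ a b) X A) :
    (∀ X : L, br X [] = X) ∧
    (∀ (X : L) (A A' : List L), A.Perm A' → br X A = br X A') ∧
    (∀ A : List L, IsLinearMap k fun X : L => br X A) ∧
    (∀ (X : L) (A B : List L) (a b : k) (Y Z : L),
      br X (A ++ (a • Y + b • Z) :: B) = a • br X (A ++ Y :: B) + b • br X (A ++ Z :: B)) ∧
    (∀ (X : L) {n m : ℕ} (Y : Fin n → L) (Aa : Fin m → L),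
      br (br X (List.ofFn Y)) (List.ofFn Aa) =
        ∑ f : Fin m → Fin (n + 1),
          br X ((List.ofFn fun i : Fin n =>
            br (Y i) (fiberList Aa f i.castSucc)) ++ fiberList Aa f (Fin.last n))) := by
  have hbr' : ∀ (X : L) (A : List L), br X A = PLAux.Cv circ X A := fun X A => by
    rw [hbr, PLAux.c_eq_Cv circ hpl]
  refine ⟨?_, ?_, ?_, ?_, ?_⟩
  · intro X
    rw [hbr', PLAux.Cv_nil]
  · intro X A A' h
    rw [hbr', hbr']
    exact PLAux.Cv_perm circ hpl X h
  · intro A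
    constructor
    · intro T T'
      simp only [hbr']
      simpa using PLAux.Cv_smul_add circ (1 : k) (1 : k) T T' A
    · intro a T
      simp only [hbr']
      simpa using PLAux.Cv_smul_add circ a (0 : k) T 0 A
  · intro X A B a b Y Z
    have hset : ∀ w : L, (A ++ Y :: B).set A.length w = A ++ w :: B := fun w => by
      rw [List.set_append_right _ _ (le_refl _), Nat.sub_self, List.set_cons_zero]
    have hlen : A.length < (A ++ Y :: B).length := by simp
    have h := PLAux.Cv_set circ X (A ++ Y :: B) A.length hlen a b Y Z
    rw [hset (a • Y + b • Z), hset Y, hset Z] at h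
    rw [hbr', hbr', hbr']
    exact h
  · intro X n m Y Aa
    simp only [hbr']
    exact PLAux.Cv_identity circ hpl X Y Aa
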